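/- Let ℋ be finite-dimensional and ρ a density operator. With P_ρ(F | F_𝒜) := Σ_{P : (𝒜,P) ∈ F} Tr(ρP), the multiplication axiom of conditional probability spaces holds on the conditions 𝒞_QM = {F_𝒜 : 𝒜 ∈ 𝔄}: for all F, G ∈ CL_QM and all 𝒜, 𝒜' ∈ 𝔄 such that G ∩ F_𝒜 = F_{𝒜'} for some 𝒜' ∈ 𝔄, one has P_ρ(F ∩ G | F_𝒜) = P_ρ(F | G ∩ F_𝒜) · P_ρ(G | F_𝒜). Consequently (S!_QM, CL_QM, 𝒞_QM, P_ρ) is a conditional probability space in the sense of Rényi. -/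

import Mathlib

open scoped ENNReal

variable (H : Type*) [NormedAddCommGroup H] [InnerProductSpace ℂ H] [CompleteSpace H]

/-- An orthogonal projection on the Hilbert space `H`, i.e. an element of `L(ℋ)`. -/
def IsProj (P : H →L[ℂ] H) : Prop := IsIdempotentElem P ∧ IsSelfAdjoint P

/-- The lattice order on projections: `P ≤ Q` iff `P * Q = P`. -/
def pleq (P Q : H →L[ℂ] H) : Prop := P * Q = P

/-- An abelian (commutative) von Neumann algebra. -/
def IsAbelianAlg (A : VonNeumannAlgebra H) : Prop :=
  ∀ x ∈ A, ∀ y ∈ A, x * y = y * x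
/-- The collection `𝔄` of abelian von Neumann subalgebras of `B(H)`. -/
def AbAlg := {A : VonNeumannAlgebra H // IsAbelianAlg H A}
/-- `P` is an atom of the Boolean lattice `L(𝒜)`, i.e. `P ∈ L₀(𝒜)`. -/
def IsAtomIn (A : VonNeumannAlgebra H) (P : H →L[ℂ] H) : Prop :=
  P ∈ A ∧ IsProj H P ∧ P ≠ 0 ∧
    ∀ Q : H →L[ℂ] H, Q ∈ A → IsProj H Q → pleq H Q P → Q = 0 ∨ Q = P

/-- The set `S!_QM` of pairs `(𝒜, P)` with `𝒜 ∈ 𝔄` and `P ∈ L₀(𝒜)` an atom of `L(𝒜)`. -/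
def SBang := {x : AbAlg H × (H →L[ℂ] H) // IsAtomIn H x.1.1 x.2}
/-- The condition `F_𝒜 = {(𝒜',P') ∈ S!_QM : 𝒜' ⊇ 𝒜}` expressing that `𝒜` is measured. -/
def Fcond (A : AbAlg H) : Set (SBang H) := {x | A.1 ≤ x.1.1.1}
/-- The Born weight `Tr(ρP)` (as a real number). -/
noncomputable def bornWeight (ρ P : H →L[ℂ] H) : ℝ :=
  (LinearMap.trace ℂ H ↑(ρ * P)).re

/-- A density operator: a positive operator of trace one. -/
def IsDensityOp (ρ : H →L[ℂ] H) : Prop :=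
  ρ.IsPositive ∧ LinearMap.trace ℂ H ↑ρ = 1
/-- The conditional probability `P_ρ(F | F_𝒜) = Σ_{P : (𝒜,P) ∈ F} Tr(ρP)`. -/
noncomputable def Pr (ρ : H →L[ℂ] H) (F : Set (SBang H)) (A : AbAlg H) : ℝ :=
  ∑' x : {x : SBang H // x ∈ F ∧ x.1.1 = A}, bornWeight H ρ x.1.1.2

set_option linter.unusedSectionVars false
set_option maxHeartbeats 1000000

namespace StmtAux

variable {H}

section Alg
variable [FiniteDimensional ℂ H] (A : VonNeumannAlgebra H)

/-- Every nonzero projection in `A` dominates an atom. -/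
lemma exists_atom_le {Q : H →L[ℂ] H} (hQ : Q ∈ A) (hQp : IsProj H Q) (hQ0 : Q ≠ 0) :
    ∃ P, IsAtomIn H A P ∧ pleq H P Q := by
  classical
  set S : Set (H →L[ℂ] H) := {R | R ∈ A ∧ IsProj H R ∧ pleq H R Q ∧ R ≠ 0} with hS
  have hQS : Q ∈ S := ⟨hQ, hQp, hQp.1, hQ0⟩
  set rk : (H →L[ℂ] H) → ℕ := fun R => Module.finrank ℂ (LinearMap.range (R : H →ₗ[ℂ] H)) with hrk
  have hne : (rk '' S).Nonempty := ⟨rk Q, Q, hQS, rfl⟩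
  obtain ⟨R, hRS, hRrk⟩ : sInf (rk '' S) ∈ rk '' S := Nat.sInf_mem hne
  refine ⟨R, ⟨hRS.1, hRS.2.1, hRS.2.2.2, ?_⟩, hRS.2.2.1⟩
  intro T hTA hTp hTle
  by_cases hT0 : T = 0
  · exact Or.inl hT0
  by_cases hTR : T = R
  · exact Or.inr hTR
  exfalso
  -- T ∈ S
  have hTQ : pleq H T Q := by
    show T * Q = T
    have e1 : T * R = T := hTle
    have e2 : R * Q = R := hRS.2.2.1
    calc T * Q = (T * R) * Q := by rw [e1]
    _ = T * (R * Q) := by rw [mul_assoc]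
    _ = T * R := by rw [e2]
    _ = T := e1
  have hTS : T ∈ S := ⟨hTA, hTp, hTQ, hT0⟩
  -- R * T = T
  have hRT : R * T = T := by
    have := congrArg star hTle
    rwa [star_mul, hTp.2.star_eq, hRS.2.1.2.star_eq] at this
  -- range T < range R
  have hle : LinearMap.range (T : H →ₗ[ℂ] H) ≤ LinearMap.range (R : H →ₗ[ℂ] H) := by
    rintro y ⟨v, rfl⟩
    exact ⟨T v, congrFun (congrArg DFunLike.coe hRT) v⟩
  have hlt : LinearMap.range (T : H →ₗ[ℂ] H) < LinearMap.range (R : H →ₗ[ℂ] H) := by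
    refine lt_of_le_of_ne hle ?_
    intro heq
    apply hTR
    ext v
    have h1 : R v ∈ LinearMap.range (T : H →ₗ[ℂ] H) := heq ▸ ⟨v, rfl⟩
    obtain ⟨w, hw⟩ := h1
    simp only [ContinuousLinearMap.coe_coe] at hw
    have h2 : T (R v) = R v := by
      rw [← hw, ← ContinuousLinearMap.mul_apply, hTp.1]
    have h3 : T (R v) = T v := by
      rw [← ContinuousLinearMap.mul_apply, hTle]
    show T v = R v
    rw [← h3, h2]
  have : rk R ≤ rk T := by
    rw [hRrk]
    exact Nat.sInf_le ⟨T, hTS, rfl⟩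
  exact absurd (Submodule.finrank_lt_finrank_of_lt hlt) (not_lt.mpr this)

/-- Distinct atoms of an abelian algebra are orthogonal. -/
lemma atoms_orth (hA : IsAbelianAlg H A) {P Q : H →L[ℂ] H} (hP : IsAtomIn H A P)
    (hQ : IsAtomIn H A Q) (hne : P ≠ Q) : P * Q = 0 := by
  have hcomm : P * Q = Q * P := hA P hP.1 Q hQ.1
  have hmem : P * Q ∈ A := mul_mem hP.1 hQ.1
  have hidem : IsIdempotentElem (P * Q) := hP.2.1.1.mul_of_commute hcomm hQ.2.1.1
  have hsa : IsSelfAdjoint (P * Q) := by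
    rw [IsSelfAdjoint, star_mul, hP.2.1.2.star_eq, hQ.2.1.2.star_eq, ← hcomm]
  have hle : pleq H (P * Q) P := by
    show (P * Q) * P = P * Q
    calc (P * Q) * P = P * (Q * P) := by rw [mul_assoc]
    _ = P * (P * Q) := by rw [← hcomm]
    _ = (P * P) * Q := by rw [mul_assoc]
    _ = P * Q := by rw [hP.2.1.1]
  rcases hP.2.2.2 (P * Q) hmem ⟨hidem, hsa⟩ hle with h | h
  · exact h
  · exfalso
    rcases hQ.2.2.2 P hP.1 hP.2.1 h with h' | h'
    · exact hP.2.2.1 h'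
    · exact hne h'

/-- The set of atoms of an abelian algebra is finite. -/
lemma atoms_finite (hA : IsAbelianAlg H A) : {P : H →L[ℂ] H | IsAtomIn H A P}.Finite := by
  classical
  apply LinearIndependent.setFinite (R := ℂ)
  rw [linearIndependent_iff'']
  intro s g hg hsum j
  by_cases hj : j ∈ s
  · have h0 : (∑ i ∈ s, g i • (i : H →L[ℂ] H)) * (j : H →L[ℂ] H) = 0 := by
      rw [hsum, zero_mul]
    rw [Finset.sum_mul] at h0
    have h1 : ∀ i ∈ s, i ≠ j → (g i • (i : H →L[ℂ] H)) * (j : H →L[ℂ] H) = 0 := by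
      intro i _ hij
      rw [smul_mul_assoc, atoms_orth A hA i.2 j.2 (fun h => hij (Subtype.ext h)), smul_zero]
    rw [Finset.sum_eq_single j (fun i hi hij => h1 i hi hij) (fun h => absurd hj h)] at h0
    rw [smul_mul_assoc, j.2.2.1.1] at h0
    rcases smul_eq_zero.mp h0 with h | h
    · exact h
    · exact absurd h j.2.2.2.1
  · exact hg j hj

/-- The atoms of an abelian algebra sum to the identity. -/
lemma sum_atoms (hA : IsAbelianAlg H A) :
    ∑ P ∈ (atoms_finite A hA).toFinset, P = (1 : H →L[ℂ] H) := by
  classical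
  set T := (atoms_finite A hA).toFinset with hT
  have hmemT : ∀ P, P ∈ T ↔ IsAtomIn H A P := by
    intro P; rw [hT, Set.Finite.mem_toFinset]; rfl
  set s : H →L[ℂ] H := ∑ P ∈ T, P with hs
  have hsA : s ∈ A := sum_mem (fun P hP => ((hmemT P).mp hP).1)
  have hrow : ∀ P, P ∈ T → P * s = P := by
    intro P hP
    rw [hs, Finset.mul_sum]
    rw [Finset.sum_eq_single P (fun Q hQ hQP =>
      atoms_orth A hA ((hmemT P).mp hP) ((hmemT Q).mp hQ) (Ne.symm hQP))
      (fun h => absurd hP h)]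
    exact ((hmemT P).mp hP).2.1.1
  have hidem : IsIdempotentElem s := by
    show s * s = s
    nth_rewrite 1 [hs]
    rw [Finset.sum_mul]
    exact Finset.sum_congr rfl (fun P hP => hrow P hP)
  have hsa : IsSelfAdjoint s := by
    rw [IsSelfAdjoint, hs, star_sum]
    exact Finset.sum_congr rfl (fun P hP => ((hmemT P).mp hP).2.1.2.star_eq)
  -- consider 1 - s
  by_cases h0 : (1 : H →L[ℂ] H) - s = 0
  · rw [sub_eq_zero] at h0; exact h0.symm
  · exfalso
    have hQA : (1 : H →L[ℂ] H) - s ∈ A := sub_mem (one_mem A) hsA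
    have hQp : IsProj H (1 - s) := by
      constructor
      · exact hidem.one_sub
      · exact (IsSelfAdjoint.one _).sub hsa
    obtain ⟨P, hPatom, hPle⟩ := exists_atom_le A hQA hQp h0
    have hPT : P ∈ T := (hmemT P).mpr hPatom
    have : P * (1 - s) = P := hPle
    rw [mul_sub, mul_one, hrow P hPT, sub_self] at this
    exact hPatom.2.2.1 this.symm

end Alg
section PrLemmas
variable [FiniteDimensional ℂ H]

open scoped InnerProductSpace

lemma trace_eq_sum_inner' (T : H →ₗ[ℂ] H) :
    LinearMap.trace ℂ H T =
      ∑ i, ⟪(stdOrthonormalBasis ℂ H) i, T ((stdOrthonormalBasis ℂ H) i)⟫_ℂ := by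
  rw [LinearMap.trace_eq_matrix_trace ℂ (stdOrthonormalBasis ℂ H).toBasis T, Matrix.trace]
  congr 1
  ext i
  rw [Matrix.diag, LinearMap.toMatrix_apply]
  simp [OrthonormalBasis.coe_toBasis_repr_apply, OrthonormalBasis.repr_apply_apply]

lemma re_trace_nonneg (S : H →L[ℂ] H) (hS : S.IsPositive) :
    0 ≤ (LinearMap.trace ℂ H ↑S).re := by
  rw [trace_eq_sum_inner', Complex.re_sum]
  apply Finset.sum_nonneg
  intro i _
  simpa using (Complex.le_def.mp (hS.inner_nonneg_right ((stdOrthonormalBasis ℂ H) i))).1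

lemma trace_coe_mul (S T : H →L[ℂ] H) :
    LinearMap.trace ℂ H ↑(S * T) = LinearMap.trace ℂ H ↑(T * S) := by
  have h : ((S * T : H →L[ℂ] H) : H →ₗ[ℂ] H) = (S : H →ₗ[ℂ] H) * (T : H →ₗ[ℂ] H) := rfl
  rw [h, LinearMap.trace_mul_comm]
  rfl

lemma born_nonneg (ρ P : H →L[ℂ] H) (hρ : ρ.IsPositive) (hP1 : IsIdempotentElem P)
    (hP2 : IsSelfAdjoint P) : 0 ≤ bornWeight H ρ P := by
  show 0 ≤ (LinearMap.trace ℂ H ↑(ρ * P)).re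
  have h1 : ρ * P = (ρ * P) * P := by rw [mul_assoc, hP1]
  rw [h1, trace_coe_mul]
  apply re_trace_nonneg
  have h2 := hρ.adjoint_conj P
  rw [hP2.adjoint_eq] at h2
  exact h2

/-- The fiber of a set of `SBang` elements over an algebra `A`. -/
def fib (F : Set (SBang H)) (A : AbAlg H) : Set (SBang H) := {x | x ∈ F ∧ x.1.1 = A}

lemma fib_finite (F : Set (SBang H)) (A : AbAlg H) : (fib F A).Finite := by
  have h1 : Finite {P : H →L[ℂ] H // IsAtomIn H A.1 P} :=
    (atoms_finite A.1 A.2).to_subtype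
  have h2 : Finite ↥(fib F A) := by
    refine Finite.of_injective (fun x => (⟨x.1.1.2, by
      have hx := x.1.2
      rw [show x.1.1.1.1 = A.1 from congrArg Subtype.val x.2.2] at hx
      exact hx⟩ :
      {P : H →L[ℂ] H // IsAtomIn H A.1 P})) ?_
    intro x y hxy
    apply Subtype.ext
    apply Subtype.ext
    apply Prod.ext
    · rw [x.2.2, y.2.2]
    · exact congrArg Subtype.val hxy
  exact Set.finite_coe_iff.mp h2

lemma tsum_subtype_congr {p q : SBang H → Prop} (h : ∀ x, p x ↔ q x) (f : SBang H → ℝ) :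
    ∑' a : {x : SBang H // p x}, f a.1 = ∑' b : {x : SBang H // q x}, f b.1 :=
  Equiv.tsum_eq (⟨fun a => ⟨a.1, (h a.1).mp a.2⟩, fun b => ⟨b.1, (h b.1).mpr b.2⟩,
    fun a => Subtype.ext rfl, fun b => Subtype.ext rfl⟩ :
      {x : SBang H // p x} ≃ {x : SBang H // q x})
    (fun b => f b.1)

lemma pr_eq_sum (ρ : H →L[ℂ] H) (F : Set (SBang H)) (A : AbAlg H) :
    Pr H ρ F A = ∑ x ∈ (fib_finite F A).toFinset, bornWeight H ρ x.1.2 := by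
  classical
  have key : Pr H ρ F A =
      ∑' x : {x : SBang H // x ∈ (fib_finite F A).toFinset}, bornWeight H ρ x.1.1.2 :=
    tsum_subtype_congr
      (fun x => by rw [Set.Finite.mem_toFinset]; exact Iff.rfl)
      (fun y => bornWeight H ρ y.1.2)
  rw [key, tsum_fintype, Finset.sum_coe_sort ((fib_finite F A).toFinset)
      (fun y => bornWeight H ρ y.1.2)]

lemma pr_congr (ρ : H →L[ℂ] H) (F F' : Set (SBang H)) (A : AbAlg H)
    (h : ∀ x : SBang H, x.1.1 = A → (x ∈ F ↔ x ∈ F')) : Pr H ρ F A = Pr H ρ F' A :=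
  tsum_subtype_congr
    (fun x => by
      constructor
      · rintro ⟨h1, h2⟩; exact ⟨(h x h2).mp h1, h2⟩
      · rintro ⟨h1, h2⟩; exact ⟨(h x h2).mpr h1, h2⟩)
    (fun y => bornWeight H ρ y.1.2)

lemma pr_zero (ρ : H →L[ℂ] H) (F : Set (SBang H)) (A : AbAlg H)
    (h : ∀ x : SBang H, x.1.1 = A → x ∉ F) : Pr H ρ F A = 0 := by
  rw [Pr]
  haveI : IsEmpty {x : SBang H // x ∈ F ∧ x.1.1 = A} := ⟨fun x => h x.1 x.2.2 x.2.1⟩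
  exact tsum_empty

lemma pr_univ (ρ : H →L[ℂ] H) (hρ : IsDensityOp H ρ) (A : AbAlg H) :
    Pr H ρ Set.univ A = 1 := by
  classical
  rw [pr_eq_sum]
  set T := (fib_finite (Set.univ : Set (SBang H)) A).toFinset with hT
  have hmemT : ∀ x : SBang H, x ∈ T ↔ x.1.1 = A := by
    intro x
    rw [hT, Set.Finite.mem_toFinset]
    exact ⟨fun h => h.2, fun h => ⟨Set.mem_univ x, h⟩⟩
  set aT := (atoms_finite A.1 A.2).toFinset with haT
  have hmemaT : ∀ P, P ∈ aT ↔ IsAtomIn H A.1 P := by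
    intro P; rw [haT, Set.Finite.mem_toFinset]; exact Iff.rfl
  have himg : T.image (fun x : SBang H => x.1.2) = aT := by
    ext P
    rw [Finset.mem_image, hmemaT]
    constructor
    · rintro ⟨x, hx, rfl⟩
      have := x.2
      rwa [(hmemT x).mp hx] at this
    · intro hP
      exact ⟨⟨(A, P), hP⟩, (hmemT _).mpr rfl, rfl⟩
  have hinj : ∀ x ∈ T, ∀ y ∈ T, (fun x : SBang H => x.1.2) x = (fun x : SBang H => x.1.2) y
      → x = y := by
    intro x hx y hy hxy
    apply Subtype.ext
    apply Prod.ext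
    · rw [(hmemT x).mp hx, (hmemT y).mp hy]
    · exact hxy
  have hsum : ∑ x ∈ T, bornWeight H ρ x.1.2
      = ∑ P ∈ aT, bornWeight H ρ P := by
    rw [← himg, Finset.sum_image hinj]
  rw [hsum]
  have hcoe : ∑ P ∈ aT, bornWeight H ρ P
      = (∑ P ∈ aT, LinearMap.trace ℂ H ↑(ρ * P)).re := by
    rw [Complex.re_sum]; rfl
  rw [hcoe, ← map_sum (LinearMap.trace ℂ H) _ aT]
  have hcoe2 : ∑ P ∈ aT, ((ρ * P : H →L[ℂ] H) : H →ₗ[ℂ] H)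
      = ((ρ * ∑ P ∈ aT, P : H →L[ℂ] H) : H →ₗ[ℂ] H) := by
    rw [Finset.mul_sum, ContinuousLinearMap.coe_sum]
  rw [hcoe2, sum_atoms A.1 A.2, mul_one, hρ.2]
  rfl

end PrLemmas
end StmtAux

/-- (`ℋ` finite-dimensional, `ρ` a density operator.) The multiplication
axiom of conditional probability spaces holds on the conditions `𝒞_QM = {F_𝒜 : 𝒜 ∈ 𝔄}`:
whenever `G ∩ F_𝒜 = F_𝒜'`, `P_ρ(F ∩ G | F_𝒜) = P_ρ(F | G ∩ F_𝒜) · P_ρ(G | F_𝒜)`.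
Together with the fact that each `P_ρ(· | F_𝒜)` is a probability measure, this makes
`(S!_QM, CL_QM, 𝒞_QM, P_ρ)` a conditional probability space in the sense of Rényi. -/
theorem pr_conditional_probability_space [FiniteDimensional ℂ H] (ρ : H →L[ℂ] H)
    (hρ : IsDensityOp H ρ) :
    (∀ (F G : Set (SBang H)) (A A' : AbAlg H), G ∩ Fcond H A = Fcond H A' →
      Pr H ρ (F ∩ G) A = Pr H ρ F A' * Pr H ρ G A) ∧
    (∀ (A : AbAlg H) (F : Set (SBang H)), 0 ≤ Pr H ρ F A ∧ Pr H ρ F A ≤ 1) ∧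
    (∀ A : AbAlg H, Pr H ρ Set.univ A = 1) ∧
    (∀ (A : AbAlg H) (f : ℕ → Set (SBang H)), Pairwise (fun i j => Disjoint (f i) (f j)) →
      Pr H ρ (⋃ i, f i) A = ∑' i, Pr H ρ (f i) A) := by
  classical
  have hnt : Nontrivial H := by
    by_contra hn
    rw [not_nontrivial_iff_subsingleton] at hn
    have h0 : (↑ρ : H →ₗ[ℂ] H) = 0 := Subsingleton.elim _ _
    have htr := hρ.2
    rw [h0, map_zero] at htr
    exact zero_ne_one htr
  have h10 : (1 : H →L[ℂ] H) ≠ 0 := by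
    intro h
    obtain ⟨v, hv⟩ := exists_ne (0 : H)
    apply hv
    have := congrFun (congrArg DFunLike.coe h) v
    simpa using this
  have hproj1 : IsProj H (1 : H →L[ℂ] H) := ⟨by show (1 : H →L[ℂ] H) * 1 = 1; rw [mul_one],
    IsSelfAdjoint.one _⟩
  have hnonneg : ∀ (A : AbAlg H) (F : Set (SBang H)), 0 ≤ Pr H ρ F A := by
    intro A F
    rw [StmtAux.pr_eq_sum]
    apply Finset.sum_nonneg
    intro x _
    exact StmtAux.born_nonneg ρ _ hρ.1 x.2.2.1.1 x.2.2.1.2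
  have huniv : ∀ A : AbAlg H, Pr H ρ Set.univ A = 1 := StmtAux.pr_univ ρ hρ
  refine ⟨?_, ?_, huniv, ?_⟩
  · -- multiplication axiom
    intro F G A A' h
    obtain ⟨P', hP', -⟩ := StmtAux.exists_atom_le A'.1 (one_mem A'.1) hproj1 h10
    have hx'A' : (⟨(A', P'), hP'⟩ : SBang H) ∈ Fcond H A' := le_refl A'.1
    have hAA' : A.1 ≤ A'.1 := by
      rw [← h] at hx'A'
      exact hx'A'.2
    by_cases hcase : A'.1 ≤ A.1
    · have hA'A : A' = A := Subtype.ext (le_antisymm hcase hAA')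
      subst hA'A
      have hGfib : ∀ x : SBang H, x.1.1 = A' → x ∈ G := by
        intro x hx
        have hxF : x ∈ Fcond H A' := by show A'.1 ≤ x.1.1.1; rw [hx]
        rw [← h] at hxF
        exact hxF.1
      have h1 : Pr H ρ (F ∩ G) A' = Pr H ρ F A' :=
        StmtAux.pr_congr ρ _ _ _ (fun x hx =>
          ⟨fun hm => hm.1, fun hm => ⟨hm, hGfib x hx⟩⟩)
      have h2 : Pr H ρ G A' = 1 := by
        rw [StmtAux.pr_congr ρ G Set.univ A' (fun x hx =>
          iff_of_true (hGfib x hx) (Set.mem_univ x))]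
        exact huniv A'
      rw [h1, h2, mul_one]
    · have hGem : ∀ x : SBang H, x.1.1 = A → x ∉ G := by
        intro x hx hxG
        apply hcase
        have hxF : x ∈ Fcond H A := by show A.1 ≤ x.1.1.1; rw [hx]
        have hx' : x ∈ Fcond H A' := by rw [← h]; exact ⟨hxG, hxF⟩
        have : A'.1 ≤ x.1.1.1 := hx'
        rwa [hx] at this
      have h1 : Pr H ρ (F ∩ G) A = 0 :=
        StmtAux.pr_zero ρ _ _ (fun x hx hm => hGem x hx hm.2)
      have h2 : Pr H ρ G A = 0 := StmtAux.pr_zero ρ _ _ hGem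
      rw [h1, h2, mul_zero]
  · -- probability bounds
    intro A F
    refine ⟨hnonneg A F, ?_⟩
    have hu := huniv A
    rw [StmtAux.pr_eq_sum] at hu ⊢
    rw [← hu]
    apply Finset.sum_le_sum_of_subset_of_nonneg
    · intro x hx
      rw [Set.Finite.mem_toFinset] at hx ⊢
      exact ⟨Set.mem_univ x, hx.2⟩
    · intro x _ _
      exact StmtAux.born_nonneg ρ _ hρ.1 x.2.2.1.1 x.2.2.1.2
  · -- countable additivity
    intro A f hdisj
    let ix : SBang H → ℕ := fun x =>
      if h : x ∈ ⋃ i, f i then (Set.mem_iUnion.mp h).choose else 0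
    have hix : ∀ x (h : x ∈ ⋃ i, f i), x ∈ f (ix x) := by
      intro x h
      simp only [ix, dif_pos h]
      exact (Set.mem_iUnion.mp h).choose_spec
    have huniq : ∀ x i, x ∈ f i → ix x = i := by
      intro x i hxi
      have hxu : x ∈ ⋃ j, f j := Set.mem_iUnion.mpr ⟨i, hxi⟩
      by_contra hne
      exact Set.disjoint_left.mp (hdisj hne) (hix x hxu) hxi
    set J := (StmtAux.fib_finite (⋃ i, f i) A).toFinset with hJdef
    have hmemJ : ∀ x : SBang H, x ∈ J ↔ (x ∈ ⋃ i, f i) ∧ x.1.1 = A := by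
      intro x
      rw [hJdef, Set.Finite.mem_toFinset]
      exact Iff.rfl
    set s : Finset ℕ := J.image ix with hsdef
    have hzero : ∀ i ∉ s, Pr H ρ (f i) A = 0 := by
      intro i hi
      apply StmtAux.pr_zero
      intro x hx hxf
      apply hi
      rw [hsdef, Finset.mem_image]
      exact ⟨x, (hmemJ x).mpr ⟨Set.mem_iUnion.mpr ⟨i, hxf⟩, hx⟩, huniq x i hxf⟩
    rw [tsum_eq_sum hzero, StmtAux.pr_eq_sum]
    have hJ : J = s.biUnion (fun i => (StmtAux.fib_finite (f i) A).toFinset) := by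
      ext x
      rw [Finset.mem_biUnion, hmemJ]
      constructor
      · rintro ⟨hxu, hxA⟩
        exact ⟨ix x, Finset.mem_image.mpr ⟨x, (hmemJ x).mpr ⟨hxu, hxA⟩, rfl⟩,
          Set.Finite.mem_toFinset _ |>.mpr ⟨hix x hxu, hxA⟩⟩
      · rintro ⟨i, _, hx⟩
        obtain ⟨hxf, hxA⟩ := Set.Finite.mem_toFinset _ |>.mp hx
        exact ⟨Set.mem_iUnion.mpr ⟨i, hxf⟩, hxA⟩
    have hpd : Set.Pairwise ↑s (fun i j =>
        Disjoint ((StmtAux.fib_finite (f i) A).toFinset)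
          ((StmtAux.fib_finite (f j) A).toFinset)) := by
      intro i _ j _ hij
      rw [Finset.disjoint_left]
      intro x hxi hxj
      obtain ⟨hxfi, -⟩ := Set.Finite.mem_toFinset _ |>.mp hxi
      obtain ⟨hxfj, -⟩ := Set.Finite.mem_toFinset _ |>.mp hxj
      exact Set.disjoint_left.mp (hdisj hij) hxfi hxfj
    rw [show (StmtAux.fib_finite (⋃ i, f i) A).toFinset = J from rfl, hJ,
      Finset.sum_biUnion hpd]
    exact Finset.sum_congr rfl (fun i _ => (StmtAux.pr_eq_sum ρ (f i) A).symm)
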